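/- Let G = (V, E, δ) be a temporal graph with δ > 0, let Φ_in : ℕ × ℕ → ℝ, and define for a node v and time t the quantity W_in(v, t) = Σ_{ω} τ_{Φ_in}(ω), the sum over all temporal walks ω of length ≥ 1 ending at v at arrival time t of their weights. Then W_in satisfies the recurrence W_in(v, t) = Σ_{(u,v,s) ∈ E, s + δ = t} (1 + Σ_{t' : t' ≤ s} W_in(u, t') · Φ_in(t', s)), where t' ranges over arrival times of walks at u. -/

import Mathlib

open Finset

abbrev TEdge (V : Type) := V × V × ℕ

/-- Total weight `W_in(v,t)` of all temporal walks of length ≥ 1 ending at node `v`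
with arrival time `t`. A walk with `m + 1` edges is encoded as `f : Fin (m+1) → ↥E`
satisfying the temporal walk conditions; since `δ > 0` every temporal walk has at most
`|E|` edges, so summing `m ∈ {0, …, |E| - 1}` captures all walks. The weight of a walk
is `∏_{i=1}^{ℓ-1} Φ(t_i + δ, t_{i+1})` (equal to 1 for walks of length 1). -/
noncomputable def WIn {V : Type} [DecidableEq V] (E : Finset (TEdge V)) (δ : ℕ)
    (Φ : ℕ → ℕ → ℝ) (v : V) (t : ℕ) : ℝ :=
  ∑ m ∈ Finset.range E.card,
    ∑ f ∈ Finset.univ.filter (fun f : Fin (m + 1) → {e : TEdge V // e ∈ E} =>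
        (∀ i : Fin m, (f i.castSucc).1.2.1 = (f i.succ).1.1 ∧
          (f i.castSucc).1.2.2 + δ ≤ (f i.succ).1.2.2) ∧
        (f (Fin.last m)).1.2.1 = v ∧ (f (Fin.last m)).1.2.2 + δ = t),
      ∏ i : Fin m, Φ ((f i.castSucc).1.2.2 + δ) ((f i.succ).1.2.2)

/-- The set of walks with `m+1` edges ending at `v` with arrival time `t`. -/
noncomputable def Wlk {V : Type} [DecidableEq V] (E : Finset (TEdge V)) (δ : ℕ)
    (m : ℕ) (v : V) (t : ℕ) : Finset (Fin (m + 1) → {e : TEdge V // e ∈ E}) :=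
  Finset.univ.filter (fun f =>
    (∀ i : Fin m, (f i.castSucc).1.2.1 = (f i.succ).1.1 ∧
      (f i.castSucc).1.2.2 + δ ≤ (f i.succ).1.2.2) ∧
    (f (Fin.last m)).1.2.1 = v ∧ (f (Fin.last m)).1.2.2 + δ = t)

/-- The weight of a walk. -/
noncomputable def wt {V : Type} [DecidableEq V] (E : Finset (TEdge V)) (δ : ℕ)
    (Φ : ℕ → ℕ → ℝ) (m : ℕ) (f : Fin (m + 1) → {e : TEdge V // e ∈ E}) : ℝ :=
  ∏ i : Fin m, Φ ((f i.castSucc).1.2.2 + δ) ((f i.succ).1.2.2)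

lemma WIn_eq {V : Type} [DecidableEq V] (E : Finset (TEdge V)) (δ : ℕ)
    (Φ : ℕ → ℕ → ℝ) (v : V) (t : ℕ) :
    WIn E δ Φ v t = ∑ m ∈ Finset.range E.card, ∑ f ∈ Wlk E δ m v t, wt E δ Φ m f := rfl

lemma walk_inj {V : Type} [DecidableEq V] {E : Finset (TEdge V)} {δ : ℕ} (hδ : 0 < δ)
    {k : ℕ} (F : Fin (k + 1) → {e : TEdge V // e ∈ E})
    (h : ∀ i : Fin k, (F i.castSucc).1.2.2 + δ ≤ (F i.succ).1.2.2) :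
    Function.Injective F := by
  have hm : StrictMono (fun i => (F i).1.2.2) := by
    rw [Fin.strictMono_iff_lt_succ]
    intro i
    exact lt_of_lt_of_le (Nat.lt_add_of_pos_right hδ) (h i)
  intro a b hab
  exact hm.injective (by simp [hab])

lemma walk_card {V : Type} [DecidableEq V] {E : Finset (TEdge V)} {δ : ℕ} (hδ : 0 < δ)
    {k : ℕ} (F : Fin (k + 1) → {e : TEdge V // e ∈ E})
    (h : ∀ i : Fin k, (F i.castSucc).1.2.2 + δ ≤ (F i.succ).1.2.2) :
    k + 1 ≤ E.card := by
  have := Fintype.card_le_of_injective F (walk_inj hδ F h)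
  simpa using this

/-- No walk of `E.card` edges can be extended by an edge `e`. -/
lemma wlk_top_empty {V : Type} [DecidableEq V] {E : Finset (TEdge V)} {δ : ℕ} (hδ : 0 < δ)
    {n : ℕ} (hE : E.card = n + 1) {e : TEdge V} (he : e ∈ E) {t' : ℕ} (ht' : t' ≤ e.2.2) :
    Wlk E δ n e.1 t' = ∅ := by
  rw [Finset.eq_empty_iff_forall_notMem]
  intro f hf
  rw [Wlk, Finset.mem_filter] at hf
  obtain ⟨-, hcond, -, harr⟩ := hf
  set F : Fin (n + 2) → {e : TEdge V // e ∈ E} := Fin.snoc f ⟨e, he⟩ with hF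
  have hcondF : ∀ i : Fin (n + 1), (F i.castSucc).1.2.2 + δ ≤ (F i.succ).1.2.2 := by
    intro i
    induction i using Fin.lastCases with
    | last =>
      have h1 : F (Fin.last n).castSucc = f (Fin.last n) := by
        simp [hF, Fin.snoc_castSucc]
      have h2 : F (Fin.last n).succ = ⟨e, he⟩ := by
        have : (Fin.last n).succ = Fin.last (n + 1) := rfl
        rw [this]; simp [hF, Fin.snoc_last]
      rw [h1, h2, harr]
      exact ht'
    | cast j =>
      have h1 : F j.castSucc.castSucc = f j.castSucc := by simp [hF, Fin.snoc_castSucc]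
      have h2 : F j.castSucc.succ = f j.succ := by
        have : j.castSucc.succ = j.succ.castSucc := rfl
        rw [this]; simp only [hF, Fin.snoc_castSucc]
      rw [h1, h2]
      exact (hcond j).2
  have := walk_card hδ F hcondF
  omega

/-- Splitting off the last edge of walks with `m+2` edges. -/
lemma step {V : Type} [DecidableEq V] (E : Finset (TEdge V)) (δ : ℕ)
    (Φ : ℕ → ℕ → ℝ) (v : V) (t : ℕ) (m : ℕ) :
    ∑ f ∈ Wlk E δ (m + 1) v t, wt E δ Φ (m + 1) f =
      ∑ e ∈ E.filter (fun e => e.2.1 = v ∧ e.2.2 + δ = t),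
        ∑ t' ∈ ((E.filter (fun e' => e'.2.1 = e.1)).image
              (fun e' => e'.2.2 + δ)).filter (fun t' => t' ≤ e.2.2),
          ∑ f ∈ Wlk E δ m e.1 t', wt E δ Φ m f * Φ t' e.2.2 := by
  -- group by last edge
  rw [← Finset.sum_fiberwise_of_maps_to (g := fun f => (f (Fin.last (m + 1))).1)
    (t := E.filter (fun e => e.2.1 = v ∧ e.2.2 + δ = t))
    (fun f hf => by
      rw [Wlk, Finset.mem_filter] at hf
      exact Finset.mem_filter.2 ⟨(f (Fin.last (m + 1))).2, hf.2.2⟩)]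
  refine Finset.sum_congr rfl (fun e heE => ?_)
  rw [Finset.mem_filter] at heE
  obtain ⟨heE, hhead, htime⟩ := heE
  -- biject with prefix walks
  have hbij : ∑ f ∈ (Wlk E δ (m + 1) v t).filter (fun f => (f (Fin.last (m + 1))).1 = e),
      wt E δ Φ (m + 1) f =
      ∑ g ∈ Finset.univ.filter (fun g : Fin (m + 1) → {e : TEdge V // e ∈ E} =>
          (∀ i : Fin m, (g i.castSucc).1.2.1 = (g i.succ).1.1 ∧
            (g i.castSucc).1.2.2 + δ ≤ (g i.succ).1.2.2) ∧
          (g (Fin.last m)).1.2.1 = e.1 ∧ (g (Fin.last m)).1.2.2 + δ ≤ e.2.2),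
        wt E δ Φ m g * Φ ((g (Fin.last m)).1.2.2 + δ) e.2.2 := by
    refine Finset.sum_bij (fun f _ => f ∘ Fin.castSucc) ?_ ?_ ?_ ?_
    · intro f hf
      rw [Finset.mem_filter] at hf
      obtain ⟨hf, hlast⟩ := hf
      rw [Wlk, Finset.mem_filter] at hf
      obtain ⟨-, hcond, -, -⟩ := hf
      refine Finset.mem_filter.2 ⟨Finset.mem_univ _, ?_, ?_, ?_⟩
      · intro i
        have := hcond i.castSucc
        have h1 : (i.castSucc).castSucc = (i.castSucc).castSucc := rfl
        have h2 : (i.castSucc).succ = (i.succ).castSucc := rfl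
        rw [h2] at this
        exact this
      · have := (hcond (Fin.last m)).1
        have h2 : (Fin.last m).succ = Fin.last (m + 1) := rfl
        rw [h2, hlast] at this
        simpa [Function.comp, Fin.castSucc] using this.symm ▸ this
      · have := (hcond (Fin.last m)).2
        have h2 : (Fin.last m).succ = Fin.last (m + 1) := rfl
        rw [h2, hlast] at this
        simpa [Function.comp] using this
    · intro f₁ hf₁ f₂ hf₂ hff
      rw [Finset.mem_filter] at hf₁ hf₂
      funext i
      induction i using Fin.lastCases with
      | last =>
        have h1 := hf₁.2
        have h2 := hf₂.2
        exact Subtype.ext (h1.trans h2.symm)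
      | cast j => exact congrFun hff j
    · intro g hg
      rw [Finset.mem_filter] at hg
      obtain ⟨-, hcond, hhd, htm⟩ := hg
      refine ⟨Fin.snoc g ⟨e, heE⟩, ?_, ?_⟩
      · refine Finset.mem_filter.2 ⟨?_, by simp [Fin.snoc_last]⟩
        rw [Wlk, Finset.mem_filter]
        refine ⟨Finset.mem_univ _, ?_, ?_, ?_⟩
        · intro i
          induction i using Fin.lastCases with
          | last =>
            have h2 : (Fin.last m).succ = Fin.last (m + 1) := rfl
            rw [h2]
            simp only [Fin.snoc_castSucc, Fin.snoc_last]
            exact ⟨hhd, htm⟩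
          | cast j =>
            have h2 : j.castSucc.succ = j.succ.castSucc := rfl
            rw [h2]
            simp only [Fin.snoc_castSucc]
            exact hcond j
        · simp [Fin.snoc_last, hhead]
        · simp [Fin.snoc_last, htime]
      · funext i
        simp [Fin.snoc_castSucc]
    · intro f hf
      rw [Finset.mem_filter] at hf
      obtain ⟨hf, hlast⟩ := hf
      rw [wt, wt, Fin.prod_univ_castSucc,
        show (Fin.last m).succ = Fin.last (m + 1) from rfl, hlast]
      rfl
  rw [hbij]
  -- group prefix walks by arrival time
  rw [← Finset.sum_fiberwise_of_maps_to (g := fun g => (g (Fin.last m)).1.2.2 + δ)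
    (t := ((E.filter (fun e' => e'.2.1 = e.1)).image
            (fun e' => e'.2.2 + δ)).filter (fun t' => t' ≤ e.2.2))
    (fun g hg => by
      rw [Finset.mem_filter] at hg
      obtain ⟨-, -, hhd, htm⟩ := hg
      refine Finset.mem_filter.2 ⟨Finset.mem_image.2
        ⟨(g (Fin.last m)).1, Finset.mem_filter.2 ⟨(g (Fin.last m)).2, hhd⟩, rfl⟩, htm⟩)]
  refine Finset.sum_congr rfl (fun t' ht' => ?_)
  rw [Finset.mem_filter] at ht'
  obtain ⟨-, ht'le⟩ := ht'
  rw [Finset.filter_filter]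
  refine Finset.sum_congr ?_ (fun g hg => ?_)
  · rw [Wlk]
    refine Finset.filter_congr (fun g _ => ?_)
    constructor
    · rintro ⟨⟨hc, hhd, -⟩, harr⟩
      exact ⟨hc, hhd, harr⟩
    · rintro ⟨hc, hhd, harr⟩
      exact ⟨⟨hc, hhd, by rw [harr]; exact ht'le⟩, harr⟩
  · rw [Wlk, Finset.mem_filter] at hg
    rw [hg.2.2.2]

theorem stmt10 {V : Type} [DecidableEq V] (E : Finset (TEdge V)) (δ : ℕ) (hδ : 0 < δ)
    (Φin : ℕ → ℕ → ℝ) (v : V) (t : ℕ) :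
    WIn E δ Φin v t =
      ∑ e ∈ E.filter (fun e => e.2.1 = v ∧ e.2.2 + δ = t),
        (1 + ∑ t' ∈ ((E.filter (fun e' => e'.2.1 = e.1)).image
              (fun e' => e'.2.2 + δ)).filter (fun t' => t' ≤ e.2.2),
            WIn E δ Φin e.1 t' * Φin t' e.2.2) := by
  obtain ⟨n, hE⟩ | hE0 : (∃ n, E.card = n + 1) ∨ E.card = 0 := by
    rcases Nat.eq_zero_or_pos E.card with h | h
    · exact Or.inr h
    · exact Or.inl ⟨E.card - 1, by omega⟩
  swap
  · have hE : E = ∅ := Finset.card_eq_zero.1 hE0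
    subst hE
    simp [WIn]
  -- base case term : walks with 1 edge
  have hbase : ∑ f ∈ Wlk E δ 0 v t, wt E δ Φin 0 f =
      ∑ e ∈ E.filter (fun e => e.2.1 = v ∧ e.2.2 + δ = t), (1 : ℝ) := by
    refine Finset.sum_bij (fun f _ => (f (Fin.last 0)).1) ?_ ?_ ?_ ?_
    · intro f hf
      rw [Wlk, Finset.mem_filter] at hf
      exact Finset.mem_filter.2 ⟨(f (Fin.last 0)).2, hf.2.2⟩
    · intro f₁ hf₁ f₂ hf₂ hff
      funext i
      induction i using Fin.cases with
      | zero => exact Subtype.ext hff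
      | succ j => exact j.elim0
    · intro e he
      rw [Finset.mem_filter] at he
      refine ⟨fun _ => ⟨e, he.1⟩, ?_, rfl⟩
      rw [Wlk, Finset.mem_filter]
      exact ⟨Finset.mem_univ _, fun i => i.elim0, he.2.1, he.2.2⟩
    · intro f hf
      rw [wt]
      simp
  rw [WIn_eq, hE, Finset.sum_range_succ', hbase]
  have hstep : ∀ m ∈ Finset.range n,
      (∑ f ∈ Wlk E δ (m + 1) v t, wt E δ Φin (m + 1) f) =
      ∑ e ∈ E.filter (fun e => e.2.1 = v ∧ e.2.2 + δ = t),
        ∑ t' ∈ ((E.filter (fun e' => e'.2.1 = e.1)).image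
              (fun e' => e'.2.2 + δ)).filter (fun t' => t' ≤ e.2.2),
          ∑ f ∈ Wlk E δ m e.1 t', wt E δ Φin m f * Φin t' e.2.2 :=
    fun m _ => step E δ Φin v t m
  rw [Finset.sum_congr rfl hstep, Finset.sum_comm, ← Finset.sum_add_distrib]
  refine Finset.sum_congr rfl (fun e he => ?_)
  rw [Finset.mem_filter] at he
  rw [add_comm]
  congr 1
  rw [Finset.sum_comm]
  refine Finset.sum_congr rfl (fun t' ht' => ?_)
  rw [Finset.mem_filter] at ht'
  rw [WIn_eq, hE, Finset.sum_mul, Finset.sum_range_succ,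
      wlk_top_empty hδ hE he.1 ht'.2, Finset.sum_empty, zero_mul, add_zero]
  refine Finset.sum_congr rfl (fun m _ => ?_)
  rw [Finset.sum_mul]
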